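/- arXiv:1905.06179 — 2 statements merged into one kernel-verified Lean document; each statement's English description precedes it below -/
import Mathlib

section
/- Let Z_{k+1}, E_{k+1}, E_k ∈ appropriate matrix spaces, let λ_{k+1} = λ_k + β_k∘(AZ_{k+1} + E_{k+1} − X), let (Z*, E*, −λ*) = ω* with AZ* + E* = X, write ω_{k+1} = (Z_{k+1}, E_{k+1}, −λ_{k+1}), and let G_k(E') = (W_kᵀ(β_k∘E'), β_k∘E', 0). Then ⟨ω_{k+1} − ω*, G_k(E_k − E_{k+1})⟩ = ⟨β_k∘(E_k − E_{k+1}), (W_k − A)(Z_{k+1} − Z*)⟩ + ⟨E_k − E_{k+1}, λ_{k+1} − λ_k⟩. -/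
open Matrix

noncomputable section

/-- Frobenius inner product `⟨M, N⟩ = trace (Mᵀ N)`. -/
def finner {a b : ℕ} (M N : Matrix (Fin a) (Fin b) ℝ) : ℝ := (Mᵀ * N).trace

/-- Frobenius norm. -/
def fnorm {a b : ℕ} (M : Matrix (Fin a) (Fin b) ℝ) : ℝ := Real.sqrt (finner M M)

/-- Entrywise positivity of a matrix. -/
def EntrywisePos {a b : ℕ} (M : Matrix (Fin a) (Fin b) ℝ) : Prop := ∀ i j, 0 < M i j

/-- Entrywise reciprocal of a matrix. -/
def recip {a b : ℕ} (M : Matrix (Fin a) (Fin b) ℝ) : Matrix (Fin a) (Fin b) ℝ :=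
  Matrix.of fun i j => (M i j)⁻¹

/-- Convex subdifferential w.r.t. the Frobenius inner product. -/
def subdiff {a b : ℕ} (f : Matrix (Fin a) (Fin b) ℝ → ℝ) (x : Matrix (Fin a) (Fin b) ℝ) :
    Set (Matrix (Fin a) (Fin b) ℝ) :=
  {u | ∀ y, f y ≥ f x + finner u (y - x)}

/-- Spectral norm (largest singular value), via the Euclidean operator characterization. -/
def specNorm {a b : ℕ} (M : Matrix (Fin a) (Fin b) ℝ) : ℝ :=
  sSup {r | ∃ x : Fin b → ℝ, (∑ i, x i ^ 2) = 1 ∧ r = Real.sqrt (∑ i, (M.mulVec x i) ^ 2)}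

/-- Triples ω = (Z, E, Λ) (with Λ standing for −λ). -/
abbrev Triple (m d n : ℕ) :=
  Matrix (Fin d) (Fin n) ℝ × Matrix (Fin m) (Fin n) ℝ × Matrix (Fin m) (Fin n) ℝ

/-- Blockwise Frobenius inner product on triples. -/
def tinner {m d n : ℕ} (ω ω' : Triple m d n) : ℝ :=
  finner ω.1 ω'.1 + finner ω.2.1 ω'.2.1 + finner ω.2.2 ω'.2.2

/-- Blockwise Frobenius norm on triples. -/
def tfnorm {m d n : ℕ} (ω : Triple m d n) : ℝ := Real.sqrt (tinner ω ω)

/-- The linear operator `D(Z) = θ∘Z − Wᵀ(β∘(AZ))`. -/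
def Dop {m d n : ℕ} (A W : Matrix (Fin m) (Fin d) ℝ) (θ : Matrix (Fin d) (Fin n) ℝ)
    (β : Matrix (Fin m) (Fin n) ℝ) (Z : Matrix (Fin d) (Fin n) ℝ) : Matrix (Fin d) (Fin n) ℝ :=
  Matrix.hadamard θ Z - Wᵀ * Matrix.hadamard β (A * Z)

/-- The block operator `H(Z,E,Λ) = (D(Z), β∘E, β⁻¹∘Λ)`. -/
def Hop {m d n : ℕ} (A W : Matrix (Fin m) (Fin d) ℝ) (θ : Matrix (Fin d) (Fin n) ℝ)
    (β : Matrix (Fin m) (Fin n) ℝ) (ω : Triple m d n) : Triple m d n :=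
  (Dop A W θ β ω.1, Matrix.hadamard β ω.2.1, Matrix.hadamard (recip β) ω.2.2)

/-- `F(Z,E,−λ) = (Wᵀλ, λ, AZ+E−X)`. -/
def Fop {m d n : ℕ} (A : Matrix (Fin m) (Fin d) ℝ) (X : Matrix (Fin m) (Fin n) ℝ)
    (W : Matrix (Fin m) (Fin d) ℝ) (ω : Triple m d n) : Triple m d n :=
  (Wᵀ * (-ω.2.2), -ω.2.2, A * ω.1 + ω.2.1 - X)

/-- `G(E') = (Wᵀ(β∘E'), β∘E', 0)`. -/
def Gop {m d n : ℕ} (W : Matrix (Fin m) (Fin d) ℝ) (β : Matrix (Fin m) (Fin n) ℝ)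
    (E' : Matrix (Fin m) (Fin n) ℝ) : Triple m d n :=
  (Wᵀ * Matrix.hadamard β E', Matrix.hadamard β E', 0)

/-- The point `R = Z_k − θ⁻¹∘[Wᵀ(λ_k + β∘(AZ_k+E_k−X))]`. -/
def Rmat {m d n : ℕ} (A : Matrix (Fin m) (Fin d) ℝ) (X : Matrix (Fin m) (Fin n) ℝ)
    (W : Matrix (Fin m) (Fin d) ℝ) (θ : Matrix (Fin d) (Fin n) ℝ) (β : Matrix (Fin m) (Fin n) ℝ)
    (Zk : Matrix (Fin d) (Fin n) ℝ) (Ek lk : Matrix (Fin m) (Fin n) ℝ) :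
    Matrix (Fin d) (Fin n) ℝ :=
  Zk - Matrix.hadamard (recip θ) (Wᵀ * (lk + Matrix.hadamard β (A * Zk + Ek - X)))

/-- The point `S = X − AZ_{k+1} − β⁻¹∘λ_k`. -/
def Smat {m d n : ℕ} (A : Matrix (Fin m) (Fin d) ℝ) (X : Matrix (Fin m) (Fin n) ℝ)
    (β : Matrix (Fin m) (Fin n) ℝ) (Zk1 : Matrix (Fin d) (Fin n) ℝ)
    (lk : Matrix (Fin m) (Fin n) ℝ) : Matrix (Fin m) (Fin n) ℝ :=
  X - A * Zk1 - Matrix.hadamard (recip β) lk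

/-- One D-LADMM step with parameters (W, θ, β): `Z_{k+1}` minimizes
`f(Z) + (1/2)⟨θ∘(Z−R), Z−R⟩`, `E_{k+1}` minimizes `g(E) + (1/2)⟨β∘(E−S), E−S⟩`,
and `λ_{k+1} = λ_k + β∘(AZ_{k+1}+E_{k+1}−X)`. -/
def DLADMMStep {m d n : ℕ} (f : Matrix (Fin d) (Fin n) ℝ → ℝ)
    (g : Matrix (Fin m) (Fin n) ℝ → ℝ) (A : Matrix (Fin m) (Fin d) ℝ)
    (X : Matrix (Fin m) (Fin n) ℝ) (W : Matrix (Fin m) (Fin d) ℝ)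
    (θ : Matrix (Fin d) (Fin n) ℝ) (β : Matrix (Fin m) (Fin n) ℝ)
    (Zk : Matrix (Fin d) (Fin n) ℝ) (Ek lk : Matrix (Fin m) (Fin n) ℝ)
    (Zk1 : Matrix (Fin d) (Fin n) ℝ) (Ek1 lk1 : Matrix (Fin m) (Fin n) ℝ) : Prop :=
  (∀ Z, f Zk1 + (1/2) * finner (Matrix.hadamard θ (Zk1 - Rmat A X W θ β Zk Ek lk))
        (Zk1 - Rmat A X W θ β Zk Ek lk)
      ≤ f Z + (1/2) * finner (Matrix.hadamard θ (Z - Rmat A X W θ β Zk Ek lk))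
        (Z - Rmat A X W θ β Zk Ek lk)) ∧
  (∀ E, g Ek1 + (1/2) * finner (Matrix.hadamard β (Ek1 - Smat A X β Zk1 lk))
        (Ek1 - Smat A X β Zk1 lk)
      ≤ g E + (1/2) * finner (Matrix.hadamard β (E - Smat A X β Zk1 lk))
        (E - Smat A X β Zk1 lk)) ∧
  lk1 = lk + Matrix.hadamard β (A * Zk1 + Ek1 - X)

/-- The KKT / solution set Ω* (stored as triples ω = (Z, E, −λ)). -/
def OmegaStar {m d n : ℕ} (f : Matrix (Fin d) (Fin n) ℝ → ℝ)
    (g : Matrix (Fin m) (Fin n) ℝ → ℝ) (A : Matrix (Fin m) (Fin d) ℝ)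
    (X : Matrix (Fin m) (Fin n) ℝ) : Set (Triple m d n) :=
  {ω | Aᵀ * ω.2.2 ∈ subdiff f ω.1 ∧ ω.2.2 ∈ subdiff g ω.2.1 ∧ A * ω.1 + ω.2.1 = X}

/-- The parameter set `S(σ, A)`. -/
def Sset {m d n : ℕ} (σ : ℝ) (A : Matrix (Fin m) (Fin d) ℝ) :
    Set (Matrix (Fin m) (Fin d) ℝ × Matrix (Fin d) (Fin n) ℝ × Matrix (Fin m) (Fin n) ℝ) :=
  {p | specNorm (p.1 - A) ≤ σ ∧ EntrywisePos p.2.1 ∧ EntrywisePos p.2.2 ∧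
    ∀ Z : Matrix (Fin d) (Fin n) ℝ, Z ≠ 0 → 0 < finner (Dop A p.1 p.2.1 p.2.2 Z) Z}

/-- `dist²_H(ω, S)` where `H` is built from `(W, θ, β)`. -/
def dist2H {m d n : ℕ} (A W : Matrix (Fin m) (Fin d) ℝ) (θ : Matrix (Fin d) (Fin n) ℝ)
    (β : Matrix (Fin m) (Fin n) ℝ) (ω : Triple m d n) (S : Set (Triple m d n)) : ℝ :=
  sInf {r | ∃ ωs ∈ S, r = tinner (ω - ωs) (Hop A W θ β (ω - ωs))}

/-- Frobenius distance of a triple to a set of triples. -/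
def distF {m d n : ℕ} (ω : Triple m d n) (S : Set (Triple m d n)) : ℝ :=
  sInf {r | ∃ ωs ∈ S, r = tfnorm (ω - ωs)}


lemma finner_comm' {a b : ℕ} (M N : Matrix (Fin a) (Fin b) ℝ) : finner M N = finner N M := by
  rw [finner, finner, ← Matrix.trace_transpose, Matrix.transpose_mul, Matrix.transpose_transpose]

lemma finner_mul_left' {a b c : ℕ} (W : Matrix (Fin a) (Fin b) ℝ)
    (Z : Matrix (Fin b) (Fin c) ℝ) (M : Matrix (Fin a) (Fin c) ℝ) :
    finner (W * Z) M = finner Z (Wᵀ * M) := by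
  simp [finner, Matrix.transpose_mul, Matrix.mul_assoc]

lemma finner_hadamard_comm' {a b : ℕ} (β E M : Matrix (Fin a) (Fin b) ℝ) :
    finner (Matrix.hadamard β E) M = finner E (Matrix.hadamard β M) := by
  simp only [finner, Matrix.trace, Matrix.diag, Matrix.mul_apply, Matrix.transpose_apply,
    Matrix.hadamard_apply]
  refine Finset.sum_congr rfl fun j _ => Finset.sum_congr rfl fun i _ => by ring

lemma finner_add_right' {a b : ℕ} (M N P : Matrix (Fin a) (Fin b) ℝ) :
    finner M (N + P) = finner M N + finner M P := by
  simp [finner, Matrix.mul_add]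

lemma finner_sub_right' {a b : ℕ} (M N P : Matrix (Fin a) (Fin b) ℝ) :
    finner M (N - P) = finner M N - finner M P := by
  simp [finner, Matrix.mul_sub]

lemma finner_zero_right' {a b : ℕ} (M : Matrix (Fin a) (Fin b) ℝ) : finner M 0 = 0 := by
  simp [finner]

/-- the algebraic identity for the `G_k`-pairing. -/
theorem dladmm_G_identity {m d n : ℕ} [NeZero m] [NeZero d] [NeZero n]
    (A W : Matrix (Fin m) (Fin d) ℝ) (X : Matrix (Fin m) (Fin n) ℝ)
    (β : Matrix (Fin m) (Fin n) ℝ) (hβ : EntrywisePos β)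
    (Zk1 Zs : Matrix (Fin d) (Fin n) ℝ) (Ek Ek1 Es lk lk1 ls : Matrix (Fin m) (Fin n) ℝ)
    (hl : lk1 = lk + Matrix.hadamard β (A * Zk1 + Ek1 - X))
    (hfeas : A * Zs + Es = X) :
    tinner ((Zk1, Ek1, -lk1) - (Zs, Es, -ls)) (Gop W β (Ek - Ek1))
      = finner (Matrix.hadamard β (Ek - Ek1)) ((W - A) * (Zk1 - Zs))
        + finner (Ek - Ek1) (lk1 - lk) := by
  subst hl
  have hEs : Es = X - A * Zs := by rw [← hfeas]; abel
  subst hEs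
  set D := Matrix.hadamard β (Ek - Ek1) with hD
  have h1 : tinner ((Zk1, Ek1, -(lk + Matrix.hadamard β (A * Zk1 + Ek1 - X)))
      - (Zs, X - A * Zs, -ls)) (Gop W β (Ek - Ek1))
      = finner (Zk1 - Zs) (Wᵀ * D) + finner (Ek1 - (X - A * Zs)) D := by
    simp [tinner, Gop, finner_zero_right', hD]
  have h2 : (W - A) * (Zk1 - Zs) = W * (Zk1 - Zs) - A * (Zk1 - Zs) := by
    rw [Matrix.sub_mul]
  have h3 : lk + Matrix.hadamard β (A * Zk1 + Ek1 - X) - lk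
      = Matrix.hadamard β (A * (Zk1 - Zs) + (Ek1 - (X - A * Zs))) := by
    rw [add_sub_cancel_left, Matrix.mul_sub]; congr 1; abel
  rw [h1, ← finner_mul_left', h3, h2, finner_sub_right',
    ← finner_hadamard_comm' β (Ek - Ek1), ← hD, finner_add_right',
    finner_comm' (W * (Zk1 - Zs)) D, finner_comm' (Ek1 - (X - A * Zs)) D]
  ring

end
end

section
/- Suppose θ ∈ ℝ^{d×n} and β ∈ ℝ^{m×n} are entrywise positive and the operator D(Z) = θ∘Z − Aᵀ(β∘(AZ)) is positive definite. If (Z, E, λ) is a fixed point of the D-LADMM step with parameters (A, θ, β) (i.e., the step maps (Z, E, λ) to itself), then (Z, E, −λ) ∈ Ω*: namely AZ + E = X, −Aᵀλ ∈ ∂f(Z), and −λ ∈ ∂g(E). -/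
open Matrix

noncomputable section

lemma finner_eq {a b : ℕ} (M N : Matrix (Fin a) (Fin b) ℝ) :
    finner M N = ∑ j, ∑ i, M i j * N i j := by
  simp [finner, Matrix.trace, Matrix.diag, Matrix.mul_apply, Matrix.transpose_apply]

lemma finner_neg_left {a b : ℕ} (M N : Matrix (Fin a) (Fin b) ℝ) :
    finner (-M) N = -finner M N := by
  simp [finner_eq, Finset.sum_neg_distrib]

lemma hadamard_recip_cancel {a b : ℕ} {c : Matrix (Fin a) (Fin b) ℝ} (hc : EntrywisePos c)
    (M : Matrix (Fin a) (Fin b) ℝ) :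
    Matrix.hadamard c (Matrix.hadamard (recip c) M) = M := by
  ext i j
  simp only [Matrix.hadamard_apply, recip, Matrix.of_apply]
  exact mul_inv_cancel_left₀ (ne_of_gt (hc i j)) _

lemma hadamard_eq_zero {a b : ℕ} {c M : Matrix (Fin a) (Fin b) ℝ} (hc : EntrywisePos c)
    (h : Matrix.hadamard c M = 0) : M = 0 := by
  ext i j
  have := congrFun (congrFun h i) j
  simp only [Matrix.hadamard_apply, Matrix.zero_apply] at this ⊢
  exact (mul_eq_zero.1 this).resolve_left (ne_of_gt (hc i j))

lemma quad_expand {a b : ℕ} (c x R y : Matrix (Fin a) (Fin b) ℝ) (t : ℝ) :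
    finner (Matrix.hadamard c (x + t • (y - x) - R)) (x + t • (y - x) - R)
      = finner (Matrix.hadamard c (x - R)) (x - R)
        + 2 * t * finner (Matrix.hadamard c (x - R)) (y - x)
        + t ^ 2 * finner (Matrix.hadamard c (y - x)) (y - x) := by
  simp only [finner_eq, Finset.mul_sum, ← Finset.sum_add_distrib]
  refine Finset.sum_congr rfl fun j _ => Finset.sum_congr rfl fun i _ => ?_
  simp only [Matrix.hadamard_apply, Matrix.sub_apply, Matrix.add_apply, Matrix.smul_apply,
    smul_eq_mul]
  ring

lemma finner_quad_nonneg {a b : ℕ} {c : Matrix (Fin a) (Fin b) ℝ} (hc : EntrywisePos c)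
    (v : Matrix (Fin a) (Fin b) ℝ) : 0 ≤ finner (Matrix.hadamard c v) v := by
  rw [finner_eq]
  refine Finset.sum_nonneg fun j _ => Finset.sum_nonneg fun i _ => ?_
  simp only [Matrix.hadamard_apply]
  have : c i j * v i j * v i j = c i j * (v i j) ^ 2 := by ring
  rw [this]
  exact mul_nonneg (le_of_lt (hc i j)) (sq_nonneg _)

/-- Optimality condition for minimizing `f + ½⟨c∘(·−R), ·−R⟩`. -/
lemma min_subdiff {a b : ℕ} {f : Matrix (Fin a) (Fin b) ℝ → ℝ}
    (hf : ConvexOn ℝ Set.univ f) {c : Matrix (Fin a) (Fin b) ℝ} (hc : EntrywisePos c)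
    (R x : Matrix (Fin a) (Fin b) ℝ)
    (hmin : ∀ y, f x + (1/2) * finner (Matrix.hadamard c (x - R)) (x - R)
      ≤ f y + (1/2) * finner (Matrix.hadamard c (y - R)) (y - R)) :
    -(Matrix.hadamard c (x - R)) ∈ subdiff f x := by
  intro y
  rw [finner_neg_left, ge_iff_le, ← sub_nonneg]
  set B := finner (Matrix.hadamard c (x - R)) (y - x) with hB
  set C := finner (Matrix.hadamard c (y - x)) (y - x) with hC
  have hC0 : 0 ≤ C := finner_quad_nonneg hc _
  have key : ∀ t : ℝ, 0 < t → t ≤ 1 → 0 ≤ f y - (f x + -B) + t * (C / 2) := by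
    intro t ht ht1
    have hmin' := hmin (x + t • (y - x))
    rw [quad_expand] at hmin'
    have hconv := hf.2 (Set.mem_univ x) (Set.mem_univ y)
      (show (0:ℝ) ≤ 1 - t by linarith) (le_of_lt ht) (by ring)
    have hxy : (1 - t) • x + t • y = x + t • (y - x) := by
      rw [smul_sub, sub_smul, one_smul]; abel
    rw [hxy] at hconv
    have h1 : f x ≤ f (x + t • (y - x)) + t * B + t ^ 2 * (C / 2) := by nlinarith
    have h2 : f (x + t • (y - x)) ≤ (1 - t) * f x + t * f y := by
      simpa [smul_eq_mul] using hconv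
    have h3 : 0 ≤ t * (f y - f x + B) + t ^ 2 * (C / 2) := by nlinarith
    have h4 : 0 ≤ (f y - f x + B) + t * (C / 2) := by
      have := (mul_nonneg_iff_of_pos_left ht).mp (by nlinarith : 0 ≤ t * ((f y - f x + B) + t * (C / 2)))
      linarith
    linarith
  by_contra hcon
  push_neg at hcon
  set ε := (f x + -B) - f y with hε
  have hε0 : 0 < ε := by simp only [hε]; linarith
  have ht : (0:ℝ) < min 1 (ε / (C + 1)) := by
    apply lt_min one_pos
    positivity
  have hkey := key _ ht (min_le_left _ _)
  have hle : min 1 (ε / (C + 1)) * (C / 2) ≤ ε / (C + 1) * (C / 2) := by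
    apply mul_le_mul_of_nonneg_right (min_le_right _ _) (by linarith)
  have hlt : ε / (C + 1) * (C / 2) < ε := by
    rw [div_mul_eq_mul_div, div_lt_iff₀ (by linarith)]
    nlinarith
  have hfy : f y - (f x + -B) = -ε := by rw [hε]; ring
  linarith

/-- Lemma 3 of the paper, for `W = A`: a fixed point of the D-LADMM step
with parameters `(A, θ, β)` is a KKT point of the problem. -/
theorem dladmm_fixed_point_is_kkt {m d n : ℕ} [NeZero m] [NeZero d] [NeZero n]
    (f : Matrix (Fin d) (Fin n) ℝ → ℝ) (g : Matrix (Fin m) (Fin n) ℝ → ℝ)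
    (hf : ConvexOn ℝ Set.univ f) (hg : ConvexOn ℝ Set.univ g)
    (A : Matrix (Fin m) (Fin d) ℝ) (X : Matrix (Fin m) (Fin n) ℝ)
    (θ : Matrix (Fin d) (Fin n) ℝ) (β : Matrix (Fin m) (Fin n) ℝ)
    (hθ : EntrywisePos θ) (hβ : EntrywisePos β)
    (hD : ∀ Z : Matrix (Fin d) (Fin n) ℝ, Z ≠ 0 → 0 < finner (Dop A A θ β Z) Z)
    (Z : Matrix (Fin d) (Fin n) ℝ) (E lam : Matrix (Fin m) (Fin n) ℝ)
    (hfix : DLADMMStep f g A X A θ β Z E lam Z E lam) :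
    A * Z + E = X ∧ -(Aᵀ * lam) ∈ subdiff f Z ∧ -lam ∈ subdiff g E := by
  obtain ⟨hZ, hE, hlam⟩ := hfix
  -- From the multiplier update being a fixed point:
  have h0 : Matrix.hadamard β (A * Z + E - X) = 0 := by
    have := hlam.symm
    rwa [add_eq_left] at this
  have hX0 : A * Z + E - X = 0 := hadamard_eq_zero hβ h0
  have hX : A * Z + E = X := by rwa [sub_eq_zero] at hX0
  refine ⟨hX, ?_, ?_⟩
  · -- Z-block
    have hR : Z - Rmat A X A θ β Z E lam = Matrix.hadamard (recip θ) (Aᵀ * lam) := by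
      simp [Rmat, hX0]
    have hθR : Matrix.hadamard θ (Z - Rmat A X A θ β Z E lam) = Aᵀ * lam := by
      rw [hR, hadamard_recip_cancel hθ]
    have := min_subdiff hf hθ (Rmat A X A θ β Z E lam) Z hZ
    rwa [hθR] at this
  · -- E-block
    have hS : E - Smat A X β Z lam = Matrix.hadamard (recip β) lam := by
      simp only [Smat]
      have : E - (X - A * Z - Matrix.hadamard (recip β) lam)
          = (A * Z + E - X) + Matrix.hadamard (recip β) lam := by abel
      rw [this, hX0, zero_add]
    have hβS : Matrix.hadamard β (E - Smat A X β Z lam) = lam := by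
      rw [hS, hadamard_recip_cancel hβ]
    have := min_subdiff hg hβ (Smat A X β Z lam) E hE
    rwa [hβS] at this

end
end
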